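/- Assume Q is symmetric positive definite and W is symmetric positive definite, and define Λ_W(X) = (A (X + Cᵀ W⁻¹ C)⁻¹ Aᵀ + Q)⁻¹. Then Λ_W is monotone on the positive semidefinite cone: for symmetric matrices X₁ ≥ X₂ ≥ 0 (with X₂ + CᵀW⁻¹C invertible), Λ_W(X₁) ≥ Λ_W(X₂). (Monotonicity of the information-form map, Appendix C.) -/

import Mathlib

open Matrix

lemma posDef_of_posSemidef_isUnit {k : ℕ} {M : Matrix (Fin k) (Fin k) ℝ}
    (hM : M.PosSemidef) (hU : IsUnit M) : M.PosDef := by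
  refine posDef_iff_dotProduct_mulVec.mpr ⟨hM.1, fun x hx => ?_⟩
  rcases lt_or_eq_of_le ((posSemidef_iff_dotProduct_mulVec.mp hM).2 x) with h | h
  · exact h
  · exfalso
    have h0 : M *ᵥ x = 0 := (hM.dotProduct_mulVec_zero_iff x).mp h.symm
    have hMi : M⁻¹ * M = 1 := nonsing_inv_mul M ((Matrix.isUnit_iff_isUnit_det _).mp hU)
    have : x = 0 := by
      have h1 := congrArg (fun v => M⁻¹ *ᵥ v) h0
      simpa [mulVec_mulVec, hMi] using h1
    exact hx this

/-- Inverse is antitone on positive definite matrices. -/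
lemma inv_antitone {k : ℕ} {A B : Matrix (Fin k) (Fin k) ℝ}
    (hA : A.PosDef) (hB : B.PosDef) (hD : (A - B).PosSemidef) :
    (B⁻¹ - A⁻¹).PosSemidef := by
  have hAu := (Matrix.isUnit_iff_isUnit_det _).mp hA.isUnit
  have hBu := (Matrix.isUnit_iff_isUnit_det _).mp hB.isUnit
  have hBiB : B⁻¹ * B = 1 := nonsing_inv_mul B hBu
  have hBBi : B * B⁻¹ = 1 := mul_nonsing_inv B hBu
  have hAiA : A⁻¹ * A = 1 := nonsing_inv_mul A hAu
  have hAAi : A * A⁻¹ = 1 := mul_nonsing_inv A hAu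
  set D := A - B with hDdef
  have hDsym : Dᵀ = D := hD.isHermitian
  have hAisym : (A⁻¹)ᵀ = A⁻¹ := by
    rw [transpose_nonsing_inv]
    congr 1
    exact hA.isHermitian
  have step1 : A * B⁻¹ * A - A = D + D * B⁻¹ * D := by
    rw [hDdef]
    have e1 : (A - B) * B⁻¹ * (A - B)
        = A * B⁻¹ * A - A * (B⁻¹ * B) - (B * B⁻¹) * A + B * (B⁻¹ * B) := by
      simp only [sub_mul, mul_sub, mul_assoc]
      abel
    rw [e1, hBiB, hBBi]
    simp only [mul_one, one_mul]
    abel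
  have key : B⁻¹ - A⁻¹ = A⁻¹ * (D + D * B⁻¹ * D) * A⁻¹ := by
    rw [← step1]
    have : A⁻¹ * (A * B⁻¹ * A - A) * A⁻¹
        = (A⁻¹ * A) * B⁻¹ * (A * A⁻¹) - A⁻¹ * (A * A⁻¹) := by
      simp only [sub_mul, mul_sub, mul_assoc]
    rw [this, hAiA, hAAi]
    simp
  have hsum : (D + D * B⁻¹ * D).PosSemidef := by
    have h2 : (D * B⁻¹ * D).PosSemidef := by
      have := hB.inv.posSemidef.mul_mul_conjTranspose_same D
      simpa [conjTranspose_eq_transpose_of_trivial, hDsym] using this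
    exact hD.add h2
  have := hsum.mul_mul_conjTranspose_same A⁻¹
  rw [key]
  simpa [conjTranspose_eq_transpose_of_trivial, hAisym] using this

/-- The information-form map `Λ_W(X) = (A (X + CᵀW⁻¹C)⁻¹ Aᵀ + Q)⁻¹`. -/
noncomputable def LamW {n m : ℕ} (A Q : Matrix (Fin n) (Fin n) ℝ)
    (C : Matrix (Fin m) (Fin n) ℝ) (W : Matrix (Fin m) (Fin m) ℝ)
    (X : Matrix (Fin n) (Fin n) ℝ) : Matrix (Fin n) (Fin n) ℝ :=
  (A * (X + Cᵀ * W⁻¹ * C)⁻¹ * Aᵀ + Q)⁻¹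

/-- Monotonicity of the information-form map (Appendix C): if `X₁ ≥ X₂ ≥ 0`
(with `X₂ + CᵀW⁻¹C` invertible), then `Λ_W(X₁) ≥ Λ_W(X₂)`. -/
theorem LamW_monotone {n m : ℕ} (A Q : Matrix (Fin n) (Fin n) ℝ)
    (C : Matrix (Fin m) (Fin n) ℝ) (W : Matrix (Fin m) (Fin m) ℝ)
    (hQ : Q.PosDef) (hW : W.PosDef)
    (X₁ X₂ : Matrix (Fin n) (Fin n) ℝ)
    (hX₂ : X₂.PosSemidef) (h12 : (X₁ - X₂).PosSemidef)
    (hinv : IsUnit (X₂ + Cᵀ * W⁻¹ * C)) :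
    (LamW A Q C W X₁ - LamW A Q C W X₂).PosSemidef := by
  set S := Cᵀ * W⁻¹ * C with hS
  have hSps : S.PosSemidef := by
    have := hW.inv.posSemidef.mul_mul_conjTranspose_same Cᵀ
    simpa [conjTranspose_eq_transpose_of_trivial, hS] using this
  have hM2 : (X₂ + S).PosDef :=
    posDef_of_posSemidef_isUnit (hX₂.add hSps) hinv
  have hM1 : (X₁ + S).PosDef := by
    have : X₁ + S = (X₂ + S) + (X₁ - X₂) := by abel
    rw [this]
    exact hM2.add_posSemidef h12
  have hinner : ((X₂ + S)⁻¹ - (X₁ + S)⁻¹).PosSemidef := by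
    refine inv_antitone hM1 hM2 ?_
    have h : (X₁ + S) - (X₂ + S) = X₁ - X₂ := by abel
    rw [h]; exact h12
  have hconj : (A * (X₂ + S)⁻¹ * Aᵀ - A * (X₁ + S)⁻¹ * Aᵀ).PosSemidef := by
    have := hinner.mul_mul_conjTranspose_same A
    have e : A * ((X₂ + S)⁻¹ - (X₁ + S)⁻¹) * Aᴴ
        = A * (X₂ + S)⁻¹ * Aᵀ - A * (X₁ + S)⁻¹ * Aᵀ := by
      simp [conjTranspose_eq_transpose_of_trivial, Matrix.mul_sub, Matrix.sub_mul]
    rwa [e] at this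
  have hY1 : (A * (X₁ + S)⁻¹ * Aᵀ + Q).PosDef := by
    refine Matrix.PosDef.posSemidef_add ?_ hQ
    have := hM1.inv.posSemidef.mul_mul_conjTranspose_same A
    simpa [conjTranspose_eq_transpose_of_trivial] using this
  have hY2 : (A * (X₂ + S)⁻¹ * Aᵀ + Q).PosDef := by
    refine Matrix.PosDef.posSemidef_add ?_ hQ
    have := hM2.inv.posSemidef.mul_mul_conjTranspose_same A
    simpa [conjTranspose_eq_transpose_of_trivial] using this
  have hfin := inv_antitone hY2 hY1 (by
    have e : (A * (X₂ + S)⁻¹ * Aᵀ + Q) - (A * (X₁ + S)⁻¹ * Aᵀ + Q)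
        = A * (X₂ + S)⁻¹ * Aᵀ - A * (X₁ + S)⁻¹ * Aᵀ := by abel
    rw [e]; exact hconj)
  simpa [LamW, hS] using hfin
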